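/- For every w ∈ L²(ℝ), the function x ↦ sech(x)·∫₀^x cosh(t)·w(t) dt belongs to L²(ℝ) and its L²(ℝ)-norm is at most 2‖w‖_{L²(ℝ)}. -/

import Mathlib

open MeasureTheory Real Filter
open scoped ENNReal NNReal

private lemma abs_add_abs_sub' {x t : ℝ} (ht : t ∈ Set.uIoc (0:ℝ) x) : |t| + |x - t| = |x| := by
  rcases Set.mem_uIoc.1 ht with ⟨h1, h2⟩ | ⟨h1, h2⟩
  · rw [abs_of_pos h1, abs_of_nonneg (sub_nonneg.2 h2), abs_of_nonneg (h1.le.trans h2)]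
    ring
  · rw [abs_of_nonpos h2, abs_of_neg (by linarith : x - t < 0),
      abs_of_neg (lt_of_lt_of_le h1 h2)]
    ring

private lemma cosh_ratio {x t : ℝ} (ht : t ∈ Set.uIoc (0:ℝ) x) :
    Real.cosh t ≤ 2 * Real.exp (-|x - t|) * Real.cosh x := by
  have h1 : Real.cosh t ≤ Real.exp |t| := by
    rw [← Real.cosh_abs, Real.cosh_eq]
    have h := Real.exp_le_exp.2 (neg_le_self (abs_nonneg t))
    linarith
  have h2 : Real.exp |x| ≤ 2 * Real.cosh x := by
    rw [Real.cosh_eq]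
    rcases abs_cases x with ⟨h, _⟩ | ⟨h, _⟩ <;> rw [h] <;>
      nlinarith [Real.exp_pos x, Real.exp_pos (-x)]
  calc Real.cosh t ≤ Real.exp |t| := h1
    _ = Real.exp (-|x - t|) * Real.exp |x| := by
        rw [← Real.exp_add]; congr 1
        have := abs_add_abs_sub' ht; linarith
    _ ≤ Real.exp (-|x - t|) * (2 * Real.cosh x) :=
        mul_le_mul_of_nonneg_left h2 (Real.exp_pos _).le
    _ = 2 * Real.exp (-|x - t|) * Real.cosh x := by ring

private noncomputable def kerK (x t : ℝ) : ℝ≥0∞ :=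
  Set.indicator (Set.uIoc (0:ℝ) x) (fun s => ENNReal.ofReal (2 * Real.exp (-|x - s|))) t

private lemma ker_meas : Measurable fun p : ℝ × ℝ => kerK p.1 p.2 := by
  have hS : MeasurableSet {q : ℝ × ℝ | q.2 ∈ Set.uIoc 0 q.1} := by
    have : {q : ℝ × ℝ | q.2 ∈ Set.uIoc 0 q.1}
        = {q : ℝ × ℝ | (0:ℝ) ⊓ q.1 < q.2} ∩ {q : ℝ × ℝ | q.2 ≤ (0:ℝ) ⊔ q.1} := by
      ext q; simp [Set.uIoc, Set.mem_Ioc, Set.mem_setOf_eq]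
    rw [this]
    exact (measurableSet_lt (measurable_const.inf measurable_fst) measurable_snd).inter
      (measurableSet_le measurable_snd (measurable_const.sup measurable_fst))
  have hf : Measurable fun q : ℝ × ℝ => ENNReal.ofReal (2 * Real.exp (-|q.1 - q.2|)) := by
    have hcont : Continuous fun y : ℝ => ENNReal.ofReal (2 * Real.exp (-|y|)) :=
      ENNReal.continuous_ofReal.comp (by continuity)
    exact hcont.measurable.comp (measurable_fst.sub measurable_snd)
  have heq : (fun p : ℝ × ℝ => kerK p.1 p.2) = Set.indicator {q : ℝ × ℝ | q.2 ∈ Set.uIoc 0 q.1}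
      (fun q => ENNReal.ofReal (2 * Real.exp (-|q.1 - q.2|))) := by
    funext p
    by_cases h : p.2 ∈ Set.uIoc (0:ℝ) p.1 <;>
      simp [kerK, Set.indicator_apply, h]
  rw [heq]
  exact hf.indicator hS

private lemma lint_Iic (x : ℝ) :
    ∫⁻ t in Set.Iic x, ENNReal.ofReal (2 * Real.exp (t - x)) = 2 := by
  have heq : (fun t : ℝ => 2 * Real.exp (t - x)) = fun t => (2 / Real.exp x) * Real.exp t := by
    funext t; rw [Real.exp_sub]; ring
  have hint : IntegrableOn (fun t => 2 * Real.exp (t - x)) (Set.Iic x) := by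
    rw [heq]; exact (integrableOn_exp_Iic x).const_mul _
  rw [← ofReal_integral_eq_lintegral_ofReal hint
    (Filter.Eventually.of_forall fun t => by positivity)]
  have : ∫ t in Set.Iic x, 2 * Real.exp (t - x) = 2 := by
    rw [heq, integral_const_mul, integral_exp_Iic]
    field_simp
  rw [this]; norm_num

private lemma lint_Ici (x : ℝ) :
    ∫⁻ t in Set.Ici x, ENNReal.ofReal (2 * Real.exp (x - t)) = 2 := by
  rw [setLIntegral_congr (Ioi_ae_eq_Ici (μ := (volume : Measure ℝ)) (a := x)).symm]
  have heq : (fun t : ℝ => 2 * Real.exp (x - t)) = fun t => (2 * Real.exp x) * Real.exp (-1 * t) := by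
    funext t; rw [neg_one_mul, Real.exp_neg, Real.exp_sub]; ring
  have hint : IntegrableOn (fun t => 2 * Real.exp (x - t)) (Set.Ioi x) := by
    rw [heq]; exact (exp_neg_integrableOn_Ioi x one_pos).const_mul _
  rw [← ofReal_integral_eq_lintegral_ofReal hint
    (Filter.Eventually.of_forall fun t => by positivity)]
  have : ∫ t in Set.Ioi x, 2 * Real.exp (x - t) = 2 := by
    rw [heq]
    simp only [neg_one_mul]
    rw [integral_const_mul, integral_exp_neg_Ioi]
    rw [mul_assoc, ← Real.exp_add]; simp
  rw [this]; norm_num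

private lemma ker_int_le (x : ℝ) : ∫⁻ t, kerK x t ≤ 2 := by
  unfold kerK
  rw [lintegral_indicator measurableSet_uIoc _]
  rcases le_or_gt 0 x with hx | hx
  · rw [Set.uIoc_of_le hx]
    calc ∫⁻ t in Set.Ioc 0 x, ENNReal.ofReal (2 * Real.exp (-|x - t|))
        = ∫⁻ t in Set.Ioc 0 x, ENNReal.ofReal (2 * Real.exp (t - x)) := by
          refine setLIntegral_congr_fun measurableSet_Ioc (fun t ht => ?_)
          rw [abs_of_nonneg (sub_nonneg.2 ht.2), neg_sub]
      _ ≤ ∫⁻ t in Set.Iic x, ENNReal.ofReal (2 * Real.exp (t - x)) :=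
          lintegral_mono_set fun t ht => ht.2
      _ = 2 := lint_Iic x
  · rw [Set.uIoc_of_ge hx.le]
    calc ∫⁻ t in Set.Ioc x 0, ENNReal.ofReal (2 * Real.exp (-|x - t|))
        = ∫⁻ t in Set.Ioc x 0, ENNReal.ofReal (2 * Real.exp (x - t)) := by
          refine setLIntegral_congr_fun measurableSet_Ioc (fun t ht => ?_)
          rw [abs_of_neg (sub_neg.2 ht.1)]; ring_nf
      _ ≤ ∫⁻ t in Set.Ici x, ENNReal.ofReal (2 * Real.exp (x - t)) :=
          lintegral_mono_set fun t ht => ht.1.le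
      _ = 2 := lint_Ici x

private lemma ker_int_le' {t : ℝ} (ht : t ≠ 0) : ∫⁻ x, kerK x t ≤ 2 := by
  rcases ht.lt_or_gt with h | h
  · have hb : ∀ x, kerK x t
        ≤ (Set.Iic t).indicator (fun x => ENNReal.ofReal (2 * Real.exp (x - t))) x := by
      intro x
      unfold kerK
      by_cases hm : t ∈ Set.uIoc (0:ℝ) x
      · rcases Set.mem_uIoc.1 hm with ⟨h1, _⟩ | ⟨h1, _⟩
        · linarith
        · rw [Set.indicator_of_mem hm, Set.indicator_of_mem (Set.mem_Iic.2 h1.le)]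
          apply le_of_eq
          rw [abs_of_neg (by linarith : x - t < 0)]; ring_nf
      · rw [Set.indicator_of_notMem hm]; exact zero_le
    calc ∫⁻ x, kerK x t
        ≤ ∫⁻ x, (Set.Iic t).indicator (fun x => ENNReal.ofReal (2 * Real.exp (x - t))) x :=
          lintegral_mono hb
      _ = ∫⁻ x in Set.Iic t, ENNReal.ofReal (2 * Real.exp (x - t)) :=
          lintegral_indicator measurableSet_Iic _
      _ = 2 := lint_Iic t
  · have hb : ∀ x, kerK x t
        ≤ (Set.Ici t).indicator (fun x => ENNReal.ofReal (2 * Real.exp (t - x))) x := by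
      intro x
      unfold kerK
      by_cases hm : t ∈ Set.uIoc (0:ℝ) x
      · rcases Set.mem_uIoc.1 hm with ⟨_, h2⟩ | ⟨_, h2⟩
        · rw [Set.indicator_of_mem hm, Set.indicator_of_mem (Set.mem_Ici.2 h2)]
          apply le_of_eq
          rw [abs_of_nonneg (by linarith : (0:ℝ) ≤ x - t)]; ring_nf
        · linarith
      · rw [Set.indicator_of_notMem hm]; exact zero_le
    calc ∫⁻ x, kerK x t
        ≤ ∫⁻ x, (Set.Ici t).indicator (fun x => ENNReal.ofReal (2 * Real.exp (t - x))) x :=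
          lintegral_mono hb
      _ = ∫⁻ x in Set.Ici t, ENNReal.ofReal (2 * Real.exp (t - x)) :=
          lintegral_indicator measurableSet_Ici _
      _ = 2 := lint_Ici t

/-- For every `w ∈ L²(ℝ)`, the function `x ↦ sech x * ∫₀^x cosh t · w t dt` belongs to
`L²(ℝ)` with norm at most `2‖w‖`. -/
theorem stmt_1 (w : ℝ → ℂ) (hw : MemLp w 2 (volume : Measure ℝ)) :
    MemLp (fun x : ℝ => (Real.cosh x)⁻¹ • ∫ t in (0:ℝ)..x, Real.cosh t • w t) 2
      (volume : Measure ℝ) ∧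
    eLpNorm (fun x : ℝ => (Real.cosh x)⁻¹ • ∫ t in (0:ℝ)..x, Real.cosh t • w t) 2
      (volume : Measure ℝ) ≤ 2 * eLpNorm w 2 (volume : Measure ℝ) := by
  set F : ℝ → ℂ := fun x => (Real.cosh x)⁻¹ • ∫ t in (0:ℝ)..x, Real.cosh t • w t with hF
  -- interval integrability of the integrand
  have hInt : ∀ a b : ℝ, IntervalIntegrable (fun t => Real.cosh t • w t) volume a b := by
    intro a b
    rw [intervalIntegrable_iff]
    have hfin : volume (Set.uIoc a b) ≠ ⊤ := by
      rw [Set.uIoc, Real.volume_Ioc]; exact ENNReal.ofReal_ne_top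
    haveI : IsFiniteMeasure (volume.restrict (Set.uIoc a b)) :=
      ⟨by rw [Measure.restrict_apply_univ]; exact lt_top_iff_ne_top.2 hfin⟩
    have hwint : IntegrableOn w (Set.uIoc a b) volume :=
      (hw.restrict _).integrable one_le_two
    refine Integrable.mono (hwint.norm.const_mul (Real.cosh (max |a| |b|)))
      ((Real.continuous_cosh.aestronglyMeasurable).smul (hw.1.restrict)) ?_
    refine (ae_restrict_iff' measurableSet_uIoc).2 (Filter.Eventually.of_forall fun t ht => ?_)
    have h1 : |t| ≤ max |a| |b| := by
      refine (abs_le_max_abs_abs ht.1.le ht.2).trans ?_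
      rcases le_total a b with h | h
      · rw [inf_eq_left.2 h, sup_eq_right.2 h]
      · rw [inf_eq_right.2 h, sup_eq_left.2 h, max_comm]
    have h2 : Real.cosh t ≤ Real.cosh (max |a| |b|) := by
      rw [Real.cosh_le_cosh]
      rwa [abs_of_nonneg (le_trans (abs_nonneg a) (le_max_left _ _))]
    have hnn : ‖Real.cosh t • w t‖ = Real.cosh t * ‖w t‖ := by
      rw [norm_smul, Real.norm_eq_abs, abs_of_pos (Real.cosh_pos t)]
    rw [hnn, Real.norm_eq_abs, abs_of_nonneg (by positivity)]
    exact mul_le_mul_of_nonneg_right h2 (norm_nonneg _)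
  have hcont : Continuous F :=
    (Real.continuous_cosh.inv₀ fun x => (Real.cosh_pos x).ne').smul
      (intervalIntegral.continuous_primitive hInt 0)
  -- a measurable representative of w
  set w' : ℝ → ℂ := hw.1.mk w with hw'def
  have hww' : w =ᵐ[volume] w' := hw.1.ae_eq_mk
  set g : ℝ → ℝ≥0∞ := fun t => (‖w' t‖₊ : ℝ≥0∞) with hgdef
  have hg : Measurable g := hw.1.stronglyMeasurable_mk.measurable.enorm
  have hwg : ∀ᵐ t ∂(volume : Measure ℝ), (‖w t‖₊ : ℝ≥0∞) = g t :=
    hww'.mono fun t h => by rw [hgdef]; simp only [h]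
  -- pointwise bound by the kernel operator
  have hpt : ∀ x : ℝ, (‖F x‖₊ : ℝ≥0∞) ≤ ∫⁻ t, kerK x t * (‖w t‖₊ : ℝ≥0∞) := by
    intro x
    have step1 : (‖F x‖₊ : ℝ≥0∞)
        ≤ ENNReal.ofReal (Real.cosh x)⁻¹
          * ∫⁻ t in Set.uIoc 0 x, (‖Real.cosh t • w t‖₊ : ℝ≥0∞) := by
      have hL : (‖F x‖₊ : ℝ≥0∞) = ENNReal.ofReal (Real.cosh x)⁻¹
          * (‖∫ t in (0:ℝ)..x, Real.cosh t • w t‖₊ : ℝ≥0∞) := by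
        simp only [hF]
        rw [nnnorm_smul, ENNReal.coe_mul,
          ← enorm_eq_nnnorm ((Real.cosh x)⁻¹), Real.enorm_eq_ofReal (inv_nonneg.2 (Real.cosh_pos x).le)]
      rw [hL]
      refine mul_le_mul_right ?_ _
      have hnorm : (‖∫ t in (0:ℝ)..x, Real.cosh t • w t‖₊ : ℝ≥0∞)
          = (‖∫ t in Set.uIoc 0 x, Real.cosh t • w t‖₊ : ℝ≥0∞) := by
        rw [← enorm_eq_nnnorm, ← enorm_eq_nnnorm, ← ofReal_norm_eq_enorm, ← ofReal_norm_eq_enorm,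
          intervalIntegral.norm_intervalIntegral_eq]
      rw [hnorm]
      exact enorm_integral_le_lintegral_enorm _
    refine step1.trans ?_
    rw [← lintegral_const_mul' _ _ ENNReal.ofReal_ne_top]
    rw [← lintegral_indicator measurableSet_uIoc _]
    refine lintegral_mono fun t => ?_
    by_cases hm : t ∈ Set.uIoc (0:ℝ) x
    · rw [Set.indicator_of_mem hm]
      unfold kerK
      rw [Set.indicator_of_mem hm]
      have hsm : (‖Real.cosh t • w t‖₊ : ℝ≥0∞)
          = ENNReal.ofReal (Real.cosh t) * (‖w t‖₊ : ℝ≥0∞) := by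
        rw [nnnorm_smul, ENNReal.coe_mul, ← enorm_eq_nnnorm (Real.cosh t), Real.enorm_eq_ofReal (Real.cosh_pos t).le]
      rw [hsm, ← mul_assoc, ← ENNReal.ofReal_mul (inv_nonneg.2 (Real.cosh_pos x).le)]
      refine mul_le_mul_left (ENNReal.ofReal_le_ofReal ?_) _
      rw [inv_mul_le_iff₀ (Real.cosh_pos x)]
      calc Real.cosh t ≤ 2 * Real.exp (-|x - t|) * Real.cosh x := cosh_ratio hm
        _ = Real.cosh x * (2 * Real.exp (-|x - t|)) := by ring
    · rw [Set.indicator_of_notMem hm]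
      unfold kerK
      rw [Set.indicator_of_notMem hm, zero_mul]
  have hpt' : ∀ x : ℝ, (‖F x‖₊ : ℝ≥0∞) ≤ ∫⁻ t, kerK x t * g t := by
    intro x
    refine (hpt x).trans (le_of_eq (lintegral_congr_ae ?_))
    exact hwg.mono fun t h => by dsimp only; rw [h]
  -- Cauchy–Schwarz in the t variable
  have hCS : ∀ x : ℝ, (∫⁻ t, kerK x t * g t) ^ 2 ≤ 2 * ∫⁻ t, kerK x t * g t ^ 2 := by
    intro x
    have hconj : Real.HolderConjugate 2 2 := Real.HolderConjugate.two_two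
    have hker1 : Measurable fun t => kerK x t :=
      ker_meas.comp (measurable_const.prodMk measurable_id)
    have h1 : ∫⁻ t, kerK x t * g t
        ≤ (∫⁻ t, (kerK x t ^ (1/2 : ℝ)) ^ (2:ℝ)) ^ (1/(2:ℝ)) *
          (∫⁻ t, (kerK x t ^ (1/2 : ℝ) * g t) ^ (2:ℝ)) ^ (1/(2:ℝ)) := by
      refine le_trans (le_of_eq (lintegral_congr fun t => ?_))
        (ENNReal.lintegral_mul_le_Lp_mul_Lq volume hconj
          (hker1.pow_const (1/2 : ℝ)).aemeasurable ((hker1.pow_const (1/2 : ℝ)).mul hg).aemeasurable)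
      rw [Pi.mul_apply, ← mul_assoc, ← ENNReal.rpow_add_of_nonneg _ _ (by norm_num) (by norm_num)]
      norm_num
    have h2 : ∀ y : ℝ≥0∞, (y ^ (1/2 : ℝ)) ^ (2:ℝ) = y := by
      intro y; rw [← ENNReal.rpow_mul]; norm_num
    have h3 : (∫⁻ t, (kerK x t ^ (1/2:ℝ) * g t) ^ (2:ℝ)) = ∫⁻ t, kerK x t * g t ^ 2 := by
      refine lintegral_congr fun t => ?_
      rw [ENNReal.mul_rpow_of_nonneg _ _ (by norm_num : (0:ℝ) ≤ 2), h2, ENNReal.rpow_two]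
    have h4 : (∫⁻ t, ((kerK x t ^ (1/2:ℝ)) ^ (2:ℝ))) = ∫⁻ t, kerK x t :=
      lintegral_congr fun t => h2 _
    rw [h4, h3] at h1
    calc (∫⁻ t, kerK x t * g t) ^ 2
        ≤ ((∫⁻ t, kerK x t) ^ (1/(2:ℝ)) * (∫⁻ t, kerK x t * g t ^ 2) ^ (1/(2:ℝ))) ^ 2 :=
          pow_le_pow_left' h1 2
      _ = (∫⁻ t, kerK x t) * (∫⁻ t, kerK x t * g t ^ 2) := by
          rw [mul_pow, ← ENNReal.rpow_two, ← ENNReal.rpow_two, ← ENNReal.rpow_mul,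
            ← ENNReal.rpow_mul]
          norm_num
      _ ≤ 2 * (∫⁻ t, kerK x t * g t ^ 2) := mul_le_mul_left (ker_int_le x) _
  -- main estimate via Tonelli
  have key : (∫⁻ x, (‖F x‖₊ : ℝ≥0∞) ^ 2) ≤ 4 * ∫⁻ t, g t ^ 2 := by
    have hmeas2 : Measurable fun p : ℝ × ℝ => kerK p.1 p.2 * g p.2 ^ 2 :=
      ker_meas.mul ((hg.comp measurable_snd).pow_const 2)
    calc ∫⁻ x, (‖F x‖₊ : ℝ≥0∞) ^ 2
        ≤ ∫⁻ x, 2 * ∫⁻ t, kerK x t * g t ^ 2 :=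
          lintegral_mono fun x => le_trans (pow_le_pow_left' (hpt' x) 2) (hCS x)
      _ = 2 * ∫⁻ x, ∫⁻ t, kerK x t * g t ^ 2 := lintegral_const_mul' 2 _ (by norm_num)
      _ = 2 * ∫⁻ t, ∫⁻ x, kerK x t * g t ^ 2 := by
          rw [lintegral_lintegral_swap hmeas2.aemeasurable]
      _ = 2 * ∫⁻ t, (∫⁻ x, kerK x t) * g t ^ 2 := by
          congr 1
          refine lintegral_congr fun t => ?_
          exact lintegral_mul_const _ (ker_meas.comp (measurable_id.prodMk measurable_const))
      _ ≤ 2 * ∫⁻ t, 2 * g t ^ 2 := by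
          refine mul_le_mul_right (lintegral_mono_ae ?_) 2
          have h0 : ∀ᵐ t : ℝ ∂(volume : Measure ℝ), t ≠ 0 := by
            refine ae_iff.2 ?_
            simp
          exact h0.mono fun t ht => mul_le_mul_left (ker_int_le' ht) _
      _ = 4 * ∫⁻ t, g t ^ 2 := by
          rw [lintegral_const_mul' 2 _ (by norm_num), ← mul_assoc]; norm_num
  -- rewrite the L² norms
  have hwnorm : eLpNorm w 2 volume = (∫⁻ t, g t ^ 2) ^ (1/2 : ℝ) := by
    rw [eLpNorm_eq_lintegral_rpow_enorm_toReal (by norm_num) (by norm_num)]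
    have hcg : ∀ᵐ t ∂(volume : Measure ℝ),
        (‖w t‖₊ : ℝ≥0∞) ^ ((2:ℝ≥0∞).toReal) = g t ^ 2 :=
      hwg.mono fun t h => by rw [h]; simp [ENNReal.rpow_two]
    simp only [enorm_eq_nnnorm]
    rw [lintegral_congr_ae hcg]
    norm_num
  have hFnorm : eLpNorm F 2 volume = (∫⁻ x, (‖F x‖₊ : ℝ≥0∞) ^ 2) ^ (1/2 : ℝ) := by
    rw [eLpNorm_eq_lintegral_rpow_enorm_toReal (by norm_num) (by norm_num)]
    simp only [enorm_eq_nnnorm]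
    norm_num [ENNReal.rpow_two]
  have hfinal : eLpNorm F 2 volume ≤ 2 * eLpNorm w 2 volume := by
    rw [hFnorm, hwnorm]
    calc (∫⁻ x, (‖F x‖₊ : ℝ≥0∞) ^ 2) ^ (1/2:ℝ)
        ≤ (4 * ∫⁻ t, g t ^ 2) ^ (1/2:ℝ) := ENNReal.rpow_le_rpow key (by norm_num)
      _ = 2 * (∫⁻ t, g t ^ 2) ^ (1/2:ℝ) := by
          rw [ENNReal.mul_rpow_of_nonneg _ _ (by norm_num : (0:ℝ) ≤ 1/2)]
          congr 1
          rw [show (4:ℝ≥0∞) = 2 ^ (2:ℝ) by rw [ENNReal.rpow_two]; norm_num,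
            ← ENNReal.rpow_mul]
          norm_num
  refine ⟨⟨hcont.aestronglyMeasurable, lt_of_le_of_lt hfinal ?_⟩, hfinal⟩
  exact ENNReal.mul_lt_top (by norm_num) hw.2
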